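/- Let k be a field and let q₁, q₂ ∈ k[x₀,…,x₄] be homogeneous polynomials of degree 2. If q₁ and q₂ have no common nonzero zero in k⁵, then for every field extension K/k with [K:k] = 3, the forms q₁ and q₂ have no common nonzero zero in K⁵. (An intersection of two quadrics in ℙ⁴ over k with a point over a cubic extension of k has a k-rational point.) -/

import Mathlib

open MvPolynomial

namespace QuadAux

open Polynomial

variable {k : Type} [Field k]

noncomputable def ev {R : Type} [CommRing R] (f : k →+* R) (q : MvPolynomial (Fin 5) k)
    (x : Fin 5 → R) : R := MvPolynomial.eval₂ f x q

noncomputable def pl {R : Type} [CommRing R] (f : k →+* R) (q : MvPolynomial (Fin 5) k)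
    (x y : Fin 5 → R) : R := ev f q (x + y) - ev f q x - ev f q y

lemma quad_mono {R : Type} [CommRing R] (r : R) (e0 e1 e2 e3 e4 : ℕ)
    (he : e0 + e1 + e2 + e3 + e4 = 2) (x y z : Fin 5 → R)
    (m : (Fin 5 → R) → R)
    (hm : ∀ u : Fin 5 → R, m u = u 0 ^ e0 * u 1 ^ e1 * u 2 ^ e2 * u 3 ^ e3 * u 4 ^ e4) :
    Polynomial.C r *
      ((Polynomial.C (x 0) + Polynomial.C (y 0) * Polynomial.X + Polynomial.C (z 0) * Polynomial.X ^ 2) ^ e0 *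
       (Polynomial.C (x 1) + Polynomial.C (y 1) * Polynomial.X + Polynomial.C (z 1) * Polynomial.X ^ 2) ^ e1 *
       (Polynomial.C (x 2) + Polynomial.C (y 2) * Polynomial.X + Polynomial.C (z 2) * Polynomial.X ^ 2) ^ e2 *
       (Polynomial.C (x 3) + Polynomial.C (y 3) * Polynomial.X + Polynomial.C (z 3) * Polynomial.X ^ 2) ^ e3 *
       (Polynomial.C (x 4) + Polynomial.C (y 4) * Polynomial.X + Polynomial.C (z 4) * Polynomial.X ^ 2) ^ e4) =
    Polynomial.C (r * m x) + Polynomial.C (r * (m (x + y) - m x - m y)) * Polynomial.X +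
      Polynomial.C (r * (m y + (m (x + z) - m x - m z))) * Polynomial.X ^ 2 +
      Polynomial.C (r * (m (y + z) - m y - m z)) * Polynomial.X ^ 3 +
      Polynomial.C (r * m z) * Polynomial.X ^ 4 := by
  simp only [hm, Pi.add_apply, map_mul, map_add, map_sub, map_pow]
  have h0 : e0 ≤ 2 := by omega
  have h1 : e1 ≤ 2 := by omega
  have h2 : e2 ≤ 2 := by omega
  have h3 : e3 ≤ 2 := by omega
  have h4 : e4 ≤ 2 := by omega
  interval_cases e0 <;> interval_cases e1 <;> interval_cases e2 <;> interval_cases e3 <;>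
    interval_cases e4 <;> first | (exfalso; omega) | ring


lemma support_deg {q : MvPolynomial (Fin 5) k} (hq : q.IsHomogeneous 2) {d : Fin 5 →₀ ℕ}
    (hd : d ∈ q.support) : d 0 + d 1 + d 2 + d 3 + d 4 = 2 := by
  have h2 := hq (mem_support_iff.mp hd)
  have h3 : Finsupp.degree d = 2 := by
    rw [Finsupp.degree_eq_weight_one]; exact_mod_cast h2
  have h4 : ∑ i : Fin 5, d i = 2 := by
    rw [← h3]
    unfold Finsupp.degree
    exact (Finset.sum_subset (Finset.subset_univ _) (by intro i _ hi; simpa using hi)).symm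
  simpa [Fin.sum_univ_five] using h4

lemma quad_expand {R : Type} [CommRing R] (f : k →+* R) {q : MvPolynomial (Fin 5) k}
    (hq : q.IsHomogeneous 2) (x y z : Fin 5 → R) :
    ev (Polynomial.C.comp f) q
        (fun j => Polynomial.C (x j) + Polynomial.C (y j) * Polynomial.X
          + Polynomial.C (z j) * Polynomial.X ^ 2) =
      Polynomial.C (ev f q x) + Polynomial.C (pl f q x y) * Polynomial.X +
        Polynomial.C (ev f q y + pl f q x z) * Polynomial.X ^ 2 +
        Polynomial.C (pl f q y z) * Polynomial.X ^ 3 +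
        Polynomial.C (ev f q z) * Polynomial.X ^ 4 := by
  classical
  unfold pl ev
  simp only [eval₂_eq']
  rw [← Finset.sum_sub_distrib, ← Finset.sum_sub_distrib, ← Finset.sum_sub_distrib,
    ← Finset.sum_sub_distrib, ← Finset.sum_sub_distrib, ← Finset.sum_sub_distrib,
    ← Finset.sum_add_distrib]
  simp only [← mul_sub, ← mul_add, map_sum, Finset.sum_mul]
  rw [← Finset.sum_add_distrib, ← Finset.sum_add_distrib, ← Finset.sum_add_distrib,
    ← Finset.sum_add_distrib]
  refine Finset.sum_congr rfl fun d hd => ?_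
  have key := quad_mono (R := R) (f (coeff d q)) (d 0) (d 1) (d 2) (d 3) (d 4)
    (support_deg hq hd) x y z (fun u => ∏ i, u i ^ d i)
    (fun u => by rw [Fin.prod_univ_five])
  simpa [Fin.prod_univ_five, RingHom.comp_apply, mul_sub, mul_add] using key


variable {R : Type} [CommRing R] (f : k →+* R) {q : MvPolynomial (Fin 5) k}

lemma ev_congr (x y : Fin 5 → R) (h : ∀ j, x j = y j) : ev f q x = ev f q y := by
  rw [show x = y from funext h]

lemma ev_zero (hq : q.IsHomogeneous 2) : ev f q 0 = 0 := by
  unfold ev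
  rw [eval₂_eq']
  refine Finset.sum_eq_zero fun d hd => ?_
  have h := support_deg hq hd
  have h5 : d 0 ≠ 0 ∨ d 1 ≠ 0 ∨ d 2 ≠ 0 ∨ d 3 ≠ 0 ∨ d 4 ≠ 0 := by omega
  rw [Fin.prod_univ_five]
  rcases h5 with h | h | h | h | h <;> simp [zero_pow h]

/-- evaluate `quad_expand` at a point `r` -/
lemma ev_quad (hq : q.IsHomogeneous 2) (x y z : Fin 5 → R) (r : R) :
    ev f q (fun j => x j + y j * r + z j * r ^ 2) =
      ev f q x + pl f q x y * r + (ev f q y + pl f q x z) * r ^ 2 +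
        pl f q y z * r ^ 3 + ev f q z * r ^ 4 := by
  have key := congrArg (Polynomial.evalRingHom r) (quad_expand f hq x y z)
  rw [show (ev (Polynomial.C.comp f) q fun j =>
        Polynomial.C (x j) + Polynomial.C (y j) * Polynomial.X
          + Polynomial.C (z j) * Polynomial.X ^ 2) =
      MvPolynomial.eval₂ (Polynomial.C.comp f) (fun j =>
        Polynomial.C (x j) + Polynomial.C (y j) * Polynomial.X
          + Polynomial.C (z j) * Polynomial.X ^ 2) q from rfl] at key
  rw [MvPolynomial.eval₂_comp_left (Polynomial.evalRingHom r)] at key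
  have h1 : (Polynomial.evalRingHom r).comp (Polynomial.C.comp f) = f := by
    ext a; simp
  rw [h1] at key
  have h2 : ((Polynomial.evalRingHom r) ∘ fun j =>
      Polynomial.C (x j) + Polynomial.C (y j) * Polynomial.X
        + Polynomial.C (z j) * Polynomial.X ^ 2) = fun j => x j + y j * r + z j * r ^ 2 := by
    funext j; simp
  rw [h2] at key
  show MvPolynomial.eval₂ f (fun j => x j + y j * r + z j * r ^ 2) q = _
  simpa using key

lemma ev_lin (hq : q.IsHomogeneous 2) (x y : Fin 5 → R) (r : R) :
    ev f q (fun j => x j + y j * r) =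
      ev f q x + pl f q x y * r + ev f q y * r ^ 2 := by
  have key := ev_quad f hq x y 0 r
  have hx0 : pl f q x 0 = 0 := by
    unfold pl; rw [add_zero, ev_zero f hq]; ring
  have hy0 : pl f q y 0 = 0 := by
    unfold pl; rw [add_zero, ev_zero f hq]; ring
  rw [hx0, hy0, ev_zero f hq] at key
  calc ev f q (fun j => x j + y j * r)
      = ev f q (fun j => x j + y j * r + (0 : Fin 5 → R) j * r ^ 2) := by
        refine ev_congr f _ _ fun j => by simp
    _ = _ := by rw [key]; ring

lemma ev_smul (hq : q.IsHomogeneous 2) (y : Fin 5 → R) (r : R) :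
    ev f q (fun j => y j * r) = ev f q y * r ^ 2 := by
  have key := ev_lin f hq 0 y r
  have h0 : pl f q 0 y = 0 := by
    unfold pl; rw [zero_add, ev_zero f hq]; ring
  rw [h0, ev_zero f hq] at key
  calc ev f q (fun j => y j * r) = ev f q (fun j => (0 : Fin 5 → R) j + y j * r) := by
        refine ev_congr f _ _ fun j => by simp
    _ = _ := by rw [key]; ring

lemma pl_symm (x y : Fin 5 → R) : pl f q x y = pl f q y x := by
  unfold pl; rw [add_comm]; ring

lemma ev_triple (hq : q.IsHomogeneous 2) (x y z : Fin 5 → R) :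
    ev f q (fun j => x j + y j + z j) =
      ev f q x + pl f q x y + (ev f q y + pl f q x z) + pl f q y z + ev f q z := by
  have key := ev_quad f hq x y z 1
  simpa using key

lemma pl_smul_right (hq : q.IsHomogeneous 2) (x y : Fin 5 → R) (r : R) :
    pl f q x (fun j => y j * r) = pl f q x y * r := by
  have h1 : ev f q (x + fun j => y j * r) = ev f q x + pl f q x y * r + ev f q y * r ^ 2 := by
    rw [← ev_lin f hq x y r]; refine ev_congr f _ _ fun j => by simp
  have h2 := ev_smul f hq y r
  unfold pl
  rw [h1, h2, show pl f q x y = ev f q (x + y) - ev f q x - ev f q y from rfl]; ring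

lemma pl_add (hq : q.IsHomogeneous 2) (x y z : Fin 5 → R) :
    pl f q (fun j => x j + y j) z = pl f q x z + pl f q y z := by
  have e1 : ev f q ((fun j => x j + y j) + z) = ev f q (fun j => x j + y j + z j) :=
    ev_congr f _ _ fun j => by simp
  have e2 : ev f q ((x : Fin 5 → R) + y) = ev f q (fun j => x j + y j) :=
    ev_congr f _ _ fun j => by simp
  have e3 := ev_triple f hq x y z
  unfold pl
  rw [e1, e3, ← e2]
  unfold pl
  ring

lemma pl_add_left (hq : q.IsHomogeneous 2) (x z y : Fin 5 → R) (r : R) :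
    pl f q (fun j => x j + z j * r) y = pl f q x y + pl f q z y * r := by
  have e2 : pl f q (fun j => z j * r) y = pl f q z y * r := by
    rw [pl_symm f _ y, pl_smul_right f hq y z r, pl_symm f y z]
  rw [pl_add f hq x (fun j => z j * r) y, e2]


lemma pl_zero_right (hq : q.IsHomogeneous 2) (x : Fin 5 → R) : pl f q x 0 = 0 := by
  unfold pl; rw [add_zero, ev_zero f hq]; ring

lemma pl_zero_left (hq : q.IsHomogeneous 2) (y : Fin 5 → R) : pl f q 0 y = 0 := by
  unfold pl; rw [zero_add, ev_zero f hq]; ring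

lemma pl_add_right (hq : q.IsHomogeneous 2) (x y z : Fin 5 → R) (r : R) :
    pl f q x (fun j => y j + z j * r) = pl f q x y + pl f q x z * r := by
  rw [pl_symm f x _, pl_add_left f hq y z x r, pl_symm f y x, pl_symm f z x]

lemma pl_self (hq : q.IsHomogeneous 2) (x : Fin 5 → R) : pl f q x x = 2 * ev f q x := by
  have h1 : ev f q (x + x) = ev f q x * 2 ^ 2 := by
    rw [← ev_smul f hq x 2]; exact ev_congr f _ _ fun j => by simp; ring
  unfold pl; rw [h1]; ring


section Descent

variable {q₁ q₂ : MvPolynomial (Fin 5) k}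

local notation "idk" => RingHom.id k

lemma descent1 (hq1 : q₁.IsHomogeneous 2) (hq2 : q₂.IsHomogeneous 2)
    (A B : Fin 5 → k) (hAB : A ≠ 0 ∨ B ≠ 0)
    (h1 : ev idk q₁ A = 0)
    (h2 : pl idk q₁ A B + ev idk q₂ A = 0)
    (h3 : ev idk q₁ B + pl idk q₂ A B = 0)
    (h4 : ev idk q₂ B = 0) :
    ∃ y : Fin 5 → k, y ≠ 0 ∧ ev idk q₁ y = 0 ∧ ev idk q₂ y = 0 := by
  by_cases hB : ev idk q₁ B = 0
  · by_cases hB0 : B = 0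
    · refine ⟨A, ?_, h1, ?_⟩
      · rcases hAB with h | h
        · exact h
        · exact absurd hB0 h
      · rw [hB0, pl_zero_right idk hq1 A] at h2
        linear_combination h2
    · exact ⟨B, hB0, hB, h4⟩
  · set d := pl idk q₁ A B / ev idk q₁ B with hd
    have hdd : pl idk q₁ A B = d * ev idk q₁ B := (div_mul_cancel₀ _ hB).symm
    refine ⟨fun j => A j + B j * (-d), ?_, ?_, ?_⟩
    · intro h0
      have hA : ∀ j, A j = B j * d := by
        intro j
        have := congrFun h0 j
        simp only [Pi.zero_apply] at this
        linear_combination this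
      have hA' : A = fun j => B j * d := funext hA
      have hevA : ev idk q₁ A = ev idk q₁ B * d ^ 2 := by
        rw [hA']; exact ev_smul idk hq1 B d
      rw [h1] at hevA
      have hd0 : d = 0 := by
        rcases mul_eq_zero.mp hevA.symm with h | h
        · exact absurd h hB
        · exact pow_eq_zero_iff (two_ne_zero) |>.mp h
      have hA0 : A = 0 := by
        funext j; simp [hA j, hd0]
      rw [hA0, pl_zero_left idk hq2 B] at h3
      rw [add_zero] at h3
      exact hB h3
    · rw [ev_lin idk hq1 A B (-d), h1, hdd]; ring
    · rw [ev_lin idk hq2 A B (-d), h4]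
      linear_combination h2 - d * h3 - hdd

lemma descent2 (hq1 : q₁.IsHomogeneous 2) (hq2 : q₂.IsHomogeneous 2)
    (A B C : Fin 5 → k) (hABC : ¬ (A = 0 ∧ B = 0 ∧ C = 0))
    (g1 : ev idk q₁ A = 0)
    (g2 : pl idk q₁ A B + ev idk q₂ A = 0)
    (g3 : ev idk q₁ B + pl idk q₁ A C + pl idk q₂ A B = 0)
    (g4 : pl idk q₁ B C + ev idk q₂ B + pl idk q₂ A C = 0)
    (g5 : ev idk q₁ C + pl idk q₂ B C = 0)
    (g6 : ev idk q₂ C = 0) :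
    ∃ y : Fin 5 → k, y ≠ 0 ∧ ev idk q₁ y = 0 ∧ ev idk q₂ y = 0 := by
  by_cases hC : ev idk q₁ C = 0
  · by_cases hC0 : C = 0
    · subst hC0
      refine descent1 hq1 hq2 A B ?_ g1 g2 ?_ ?_
      · by_contra h
        push_neg at h
        exact hABC ⟨h.1, h.2, rfl⟩
      · rw [pl_zero_right idk hq1 A] at g3; linear_combination g3
      · rw [pl_zero_right idk hq1 B, pl_zero_right idk hq2 A] at g4; linear_combination g4
    · exact ⟨C, hC0, hC, g6⟩
  · obtain ⟨c₀, hc0⟩ : ∃ c : k, pl idk q₁ A C = c * ev idk q₁ C :=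
      ⟨pl idk q₁ A C / ev idk q₁ C, (div_mul_cancel₀ _ hC).symm⟩
    obtain ⟨c₁, hc1⟩ : ∃ c : k, pl idk q₁ B C + pl idk q₂ A C = c * ev idk q₁ C :=
      ⟨(pl idk q₁ B C + pl idk q₂ A C) / ev idk q₁ C, (div_mul_cancel₀ _ hC).symm⟩
    -- expansions
    have eA1 : ∀ (q : MvPolynomial (Fin 5) k), q.IsHomogeneous 2 →
        ev idk q (fun j => A j + C j * (-c₀)) =
          ev idk q A + pl idk q A C * (-c₀) + ev idk q C * (-c₀) ^ 2 :=
      fun q hq => ev_lin idk hq A C (-c₀)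
    have eB1 : ∀ (q : MvPolynomial (Fin 5) k), q.IsHomogeneous 2 →
        ev idk q (fun j => B j + C j * (-c₁)) =
          ev idk q B + pl idk q B C * (-c₁) + ev idk q C * (-c₁) ^ 2 :=
      fun q hq => ev_lin idk hq B C (-c₁)
    have ePL : ∀ (q : MvPolynomial (Fin 5) k), q.IsHomogeneous 2 →
        pl idk q (fun j => A j + C j * (-c₀)) (fun j => B j + C j * (-c₁)) =
          pl idk q A B + pl idk q A C * (-c₁) +
            (pl idk q B C * (-c₀) + (2 * ev idk q C) * (-c₀) * (-c₁)) := by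
      intro q hq
      rw [pl_add_left idk hq A C _ (-c₀)]
      rw [pl_add_right idk hq A B C (-c₁)]
      rw [pl_add_right idk hq C B C (-c₁)]
      rw [pl_self idk hq C, pl_symm idk C B]
      ring
    refine descent1 hq1 hq2 (fun j => A j + C j * (-c₀)) (fun j => B j + C j * (-c₁)) ?_ ?_ ?_ ?_ ?_
    · -- nonvanishing
      by_contra h
      push_neg at h
      obtain ⟨hA1, hB1⟩ := h
      have hAj : ∀ j, A j = C j * c₀ := by
        intro j; have := congrFun hA1 j; simp only [Pi.zero_apply] at this; linear_combination this
      have hBj : ∀ j, B j = C j * c₁ := by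
        intro j; have := congrFun hB1 j; simp only [Pi.zero_apply] at this; linear_combination this
      have hevA : ev idk q₁ A = ev idk q₁ C * c₀ ^ 2 := by
        rw [funext hAj]; exact ev_smul idk hq1 C c₀
      rw [g1] at hevA
      have hc00 : c₀ = 0 := by
        rcases mul_eq_zero.mp hevA.symm with h | h
        · exact absurd h hC
        · exact pow_eq_zero_iff (two_ne_zero) |>.mp h
      have hA0 : A = 0 := by funext j; simp [hAj j, hc00]
      have hevB : ev idk q₁ B = ev idk q₁ C * c₁ ^ 2 := by
        rw [funext hBj]; exact ev_smul idk hq1 C c₁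
      have hBzero : ev idk q₁ B = 0 := by
        rw [hA0, pl_zero_left idk hq1 C, pl_zero_left idk hq2 B] at g3
        linear_combination g3
      rw [hBzero] at hevB
      have hc10 : c₁ = 0 := by
        rcases mul_eq_zero.mp hevB.symm with h | h
        · exact absurd h hC
        · exact pow_eq_zero_iff (two_ne_zero) |>.mp h
      have hB0 : B = 0 := by funext j; simp [hBj j, hc10]
      rw [hB0, pl_zero_left idk hq2 C, add_zero] at g5
      exact hC g5
    · rw [eA1 q₁ hq1]
      linear_combination g1 - c₀ * hc0
    · rw [ePL q₁ hq1, eA1 q₂ hq2, g6]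
      linear_combination g2 - c₁ * hc0 - c₀ * hc1
    · rw [eB1 q₁ hq1, ePL q₂ hq2]
      linear_combination g3 - hc0 - c₁ * hc1 - c₀ * g5 + 2 * c₀ * c₁ * g6
    · rw [eB1 q₂ hq2, g6]
      linear_combination g4 - hc1 - c₁ * g5

end Descent

lemma natDegree_ev_le {R : Type} [CommRing R] (f : k →+* R) {q : MvPolynomial (Fin 5) k}
    (hq : q.IsHomogeneous 2) (w : Fin 5 → Polynomial R) (m : ℕ)
    (hw : ∀ j, (w j).natDegree ≤ m) :
    (ev (Polynomial.C.comp f) q w).natDegree ≤ 2 * m := by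
  unfold ev
  rw [eval₂_eq']
  refine Polynomial.natDegree_sum_le_of_forall_le _ _ fun d hd => ?_
  refine (Polynomial.natDegree_mul_le).trans ?_
  have h1 : (Polynomial.C (f (coeff d q))).natDegree = 0 := Polynomial.natDegree_C _
  rw [show (Polynomial.C.comp f) (coeff d q) = Polynomial.C (f (coeff d q)) from rfl, h1, zero_add]
  refine (Polynomial.natDegree_prod_le _ _).trans ?_
  have h2 : ∀ i : Fin 5, (w i ^ d i).natDegree ≤ d i * m := fun i =>
    Polynomial.natDegree_pow_le.trans (Nat.mul_le_mul_left _ (hw i))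
  calc ∑ i : Fin 5, (w i ^ d i).natDegree ≤ ∑ i : Fin 5, d i * m :=
        Finset.sum_le_sum fun i _ => h2 i
    _ = (d 0 + d 1 + d 2 + d 3 + d 4) * m := by rw [Fin.sum_univ_five]; ring
    _ = 2 * m := by rw [support_deg hq hd]

section Cases

variable {q₁ q₂ : MvPolynomial (Fin 5) k}

local notation "idk" => RingHom.id k

lemma caseB (hq1 : q₁.IsHomogeneous 2) (hq2 : q₂.IsHomogeneous 2)
    (a b c : Fin 5 → k) (f l₁ l₂ : Polynomial k)
    (hfirr : Irreducible f) (hf3 : f.natDegree = 3)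
    (hp1 : ev (Polynomial.C.comp idk) q₁
      (fun j => Polynomial.C (a j) + Polynomial.C (b j) * Polynomial.X
        + Polynomial.C (c j) * Polynomial.X ^ 2) = f * l₁)
    (hp2 : ev (Polynomial.C.comp idk) q₂
      (fun j => Polynomial.C (a j) + Polynomial.C (b j) * Polynomial.X
        + Polynomial.C (c j) * Polynomial.X ^ 2) = f * l₂)
    (hl1 : l₁.natDegree ≤ 1) (hl2 : l₂.natDegree ≤ 1)
    (hα : l₁.coeff 1 ≠ 0)
    (hR : l₁.coeff 1 * l₂.coeff 0 = l₂.coeff 1 * l₁.coeff 0) :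
    ∃ y : Fin 5 → k, y ≠ 0 ∧ ev idk q₁ y = 0 ∧ ev idk q₂ y = 0 := by
  set t₀ : k := -(l₁.coeff 0) / (l₁.coeff 1) with ht₀
  have hl₁t : Polynomial.eval t₀ l₁ = 0 := by
    conv_lhs => rw [Polynomial.eq_X_add_C_of_natDegree_le_one hl1]
    simp only [Polynomial.eval_add, Polynomial.eval_mul, Polynomial.eval_C, Polynomial.eval_X]
    rw [ht₀]
    field_simp
    ring
  have hl₂t : Polynomial.eval t₀ l₂ = 0 := by
    conv_lhs => rw [Polynomial.eq_X_add_C_of_natDegree_le_one hl2]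
    simp only [Polynomial.eval_add, Polynomial.eval_mul, Polynomial.eval_C, Polynomial.eval_X]
    rw [ht₀]
    field_simp
    linear_combination hR
  have key : ∀ (q : MvPolynomial (Fin 5) k) (l : Polynomial k), q.IsHomogeneous 2 →
      ev (Polynomial.C.comp idk) q
        (fun j => Polynomial.C (a j) + Polynomial.C (b j) * Polynomial.X
          + Polynomial.C (c j) * Polynomial.X ^ 2) = f * l →
      Polynomial.eval t₀ l = 0 →
      ev idk q (fun j => a j + b j * t₀ + c j * t₀ ^ 2) = 0 := by
    intro q l hq hp hlt
    have h2 : Polynomial.eval t₀ (ev (Polynomial.C.comp idk) q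
        (fun j => Polynomial.C (a j) + Polynomial.C (b j) * Polynomial.X
          + Polynomial.C (c j) * Polynomial.X ^ 2))
        = ev idk q a + pl idk q a b * t₀ + (ev idk q b + pl idk q a c) * t₀ ^ 2
          + pl idk q b c * t₀ ^ 3 + ev idk q c * t₀ ^ 4 := by
      rw [quad_expand (RingHom.id k) hq a b c]
      simp
    rw [hp, Polynomial.eval_mul, hlt, mul_zero] at h2
    rw [ev_quad (RingHom.id k) hq a b c t₀, ← h2]
  have hy1 := key q₁ l₁ hq1 hp1 hl₁t
  have hy2 := key q₂ l₂ hq2 hp2 hl₂t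
  by_cases hy : (fun j => a j + b j * t₀ + c j * t₀ ^ 2) = (0 : Fin 5 → k)
  · exfalso
    have hfac : (fun j => Polynomial.C (a j) + Polynomial.C (b j) * Polynomial.X
        + Polynomial.C (c j) * Polynomial.X ^ 2) =
        fun j => (Polynomial.C (b j + t₀ * c j) + Polynomial.C (c j) * Polynomial.X)
          * (Polynomial.X - Polynomial.C t₀) := by
      funext j
      have hyj : a j + b j * t₀ + c j * t₀ ^ 2 = 0 := by
        have := congrFun hy j; simpa using this
      have hyj' := congrArg Polynomial.C hyj
      simp only [map_add, map_mul, map_pow, map_zero] at hyj'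
      simp only [map_add, map_mul]
      linear_combination hyj'
    rw [hfac, ev_smul (Polynomial.C.comp (RingHom.id k)) hq1
      (fun j => Polynomial.C (b j + t₀ * c j) + Polynomial.C (c j) * Polynomial.X)
      (Polynomial.X - Polynomial.C t₀)] at hp1
    set G := ev (Polynomial.C.comp (RingHom.id k)) q₁
      (fun j => Polynomial.C (b j + t₀ * c j) + Polynomial.C (c j) * Polynomial.X) with hG
    have hGdeg : G.natDegree ≤ 2 := by
      have := natDegree_ev_le (RingHom.id k) hq1
        (fun j => Polynomial.C (b j + t₀ * c j) + Polynomial.C (c j) * Polynomial.X) 1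
        (fun j => by
          have h1 : (Polynomial.C (b j + t₀ * c j)).natDegree = 0 := Polynomial.natDegree_C _
          have h2 : (Polynomial.C (c j) * Polynomial.X).natDegree ≤ 1 :=
            (Polynomial.natDegree_C_mul_le _ _).trans (by simp)
          exact (Polynomial.natDegree_add_le _ _).trans (max_le (by omega) h2))
      simpa only [Nat.mul_one] using this
    have hl₁ne : l₁ ≠ 0 := fun h => hα (by rw [h]; simp)
    have hfne : f ≠ 0 := hfirr.ne_zero
    have hGne : G ≠ 0 := by
      intro h
      rw [h, zero_mul] at hp1
      exact (mul_ne_zero hfne hl₁ne) hp1.symm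
    have hfprime : Prime f := (UniqueFactorizationMonoid.irreducible_iff_prime).mp hfirr
    have hdvd : f ∣ G * (Polynomial.X - Polynomial.C t₀) ^ 2 := ⟨l₁, hp1⟩
    rcases hfprime.2.2 _ _ hdvd with h | h
    · have := Polynomial.natDegree_le_of_dvd h hGne
      omega
    · have h2 := hfprime.dvd_of_dvd_pow h
      have h3 := Polynomial.natDegree_le_of_dvd h2 (Polynomial.X_sub_C_ne_zero t₀)
      rw [Polynomial.natDegree_X_sub_C] at h3
      omega
  · exact ⟨_, hy, hy1, hy2⟩

set_option maxHeartbeats 1000000 in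
lemma caseC (hq1 : q₁.IsHomogeneous 2) (hq2 : q₂.IsHomogeneous 2)
    (a b c : Fin 5 → k) (habc : ¬ (a = 0 ∧ b = 0 ∧ c = 0)) (f l₁ l₂ : Polynomial k)
    (hp1 : ev (Polynomial.C.comp idk) q₁
      (fun j => Polynomial.C (a j) + Polynomial.C (b j) * Polynomial.X
        + Polynomial.C (c j) * Polynomial.X ^ 2) = f * l₁)
    (hp2 : ev (Polynomial.C.comp idk) q₂
      (fun j => Polynomial.C (a j) + Polynomial.C (b j) * Polynomial.X
        + Polynomial.C (c j) * Polynomial.X ^ 2) = f * l₂)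
    (hl1 : l₁.natDegree ≤ 1) (hl2 : l₂.natDegree ≤ 1)
    (hR : l₂.coeff 1 * l₁.coeff 0 - l₁.coeff 1 * l₂.coeff 0 ≠ 0) :
    ∃ y : Fin 5 → k, y ≠ 0 ∧ ev idk q₁ y = 0 ∧ ev idk q₂ y = 0 := by
  classical
  set α₁ := l₁.coeff 1 with hα₁
  set β₁ := l₁.coeff 0 with hβ₁
  set α₂ := l₂.coeff 1 with hα₂
  set β₂ := l₂.coeff 0 with hβ₂
  have hRv : α₂ * β₁ - α₁ * β₂ ≠ 0 := hR
  set Av : Fin 5 → k := fun j => α₁ ^ 2 * a j - α₁ * β₁ * b j + β₁ ^ 2 * c j with hAv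
  set Bv : Fin 5 → k := fun j =>
    2 * α₁ * α₂ * a j - (α₁ * β₂ + α₂ * β₁) * b j + 2 * β₁ * β₂ * c j with hBv
  set Cv : Fin 5 → k := fun j => α₂ ^ 2 * a j - α₂ * β₂ * b j + β₂ ^ 2 * c j with hCv
  -- nonvanishing of (Av, Bv, Cv)
  have habc' : ¬ (Av = 0 ∧ Bv = 0 ∧ Cv = 0) := by
    rintro ⟨hA, hB, hC⟩
    apply habc
    refine ⟨funext fun j => ?_, funext fun j => ?_, funext fun j => ?_⟩ <;>
    · have hAj : α₁ ^ 2 * a j - α₁ * β₁ * b j + β₁ ^ 2 * c j = 0 := by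
        have := congrFun hA j; simpa [hAv] using this
      have hBj : 2 * α₁ * α₂ * a j - (α₁ * β₂ + α₂ * β₁) * b j + 2 * β₁ * β₂ * c j = 0 := by
        have := congrFun hB j; simpa [hBv] using this
      have hCj : α₂ ^ 2 * a j - α₂ * β₂ * b j + β₂ ^ 2 * c j = 0 := by
        have := congrFun hC j; simpa [hCv] using this
      first
      | (have h1 : (α₂ * β₁ - α₁ * β₂) ^ 2 * a j = 0 := by
          linear_combination β₂ ^ 2 * hAj - β₁ * β₂ * hBj + β₁ ^ 2 * hCj
         have := mul_eq_zero.mp h1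
         rcases this with h | h
         · exact absurd (pow_eq_zero_iff two_ne_zero |>.mp h) hRv
         · simpa using h)
      | (have h1 : (α₂ * β₁ - α₁ * β₂) ^ 2 * b j = 0 := by
          linear_combination 2 * α₂ * β₂ * hAj - (α₁ * β₂ + α₂ * β₁) * hBj + 2 * α₁ * β₁ * hCj
         have := mul_eq_zero.mp h1
         rcases this with h | h
         · exact absurd (pow_eq_zero_iff two_ne_zero |>.mp h) hRv
         · simpa using h)
      | (have h1 : (α₂ * β₁ - α₁ * β₂) ^ 2 * c j = 0 := by
          linear_combination α₂ ^ 2 * hAj - α₁ * α₂ * hBj + α₁ ^ 2 * hCj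
         have := mul_eq_zero.mp h1
         rcases this with h | h
         · exact absurd (pow_eq_zero_iff two_ne_zero |>.mp h) hRv
         · simpa using h)
  -- the S-side polynomial data
  set D : Polynomial k := Polynomial.C α₁ + Polynomial.C α₂ * Polynomial.X with hD_def
  set N : Polynomial k := -Polynomial.C β₁ - Polynomial.C β₂ * Polynomial.X with hN_def
  have hD : D ≠ 0 := by
    intro h
    have h0 : α₁ = 0 := by
      have := congrArg (fun p => Polynomial.coeff p 0) h
      simpa [hD_def, Polynomial.coeff_add, Polynomial.coeff_C_mul, Polynomial.coeff_C,
        Polynomial.coeff_X_zero] using this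
    have h1 : α₂ = 0 := by
      have := congrArg (fun p => Polynomial.coeff p 1) h
      simpa [hD_def, Polynomial.coeff_add, Polynomial.coeff_C_mul, Polynomial.coeff_C,
        Polynomial.coeff_X_one] using this
    exact hRv (by rw [h0, h1]; ring)
  -- fraction field
  set F := FractionRing (Polynomial k) with hF
  set φ := algebraMap (Polynomial k) F with hφ_def
  have hφ : Function.Injective φ := IsFractionRing.injective (Polynomial k) F
  set g : k →+* F := φ.comp Polynomial.C with hg
  have hφD : φ D ≠ 0 := fun h => hD (by
    apply hφ; rw [h, map_zero])
  set t₀F : F := φ N / φ D with ht₀F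
  set wF : Fin 5 → F := fun j => g (a j) + g (b j) * t₀F + g (c j) * t₀F ^ 2 with hwF
  set zS : Fin 5 → Polynomial k := fun j => Polynomial.C (Av j) + Polynomial.C (Bv j) * Polynomial.X
    + Polynomial.C (Cv j) * Polynomial.X ^ 2 with hzS
  have hzfac : ∀ j, zS j = D ^ 2 * Polynomial.C (a j) + (D * N) * Polynomial.C (b j)
      + N ^ 2 * Polynomial.C (c j) := by
    intro j
    simp only [hzS, hAv, hBv, hCv, hD_def, hN_def, map_add, map_mul, map_sub, map_pow,
      map_ofNat, map_one]
    push_cast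
    ring
  have hz : ∀ j, φ (zS j) = wF j * (φ D) ^ 2 := by
    intro j
    rw [hzfac j]
    simp only [map_add, map_mul, map_pow, hwF, hg, RingHom.comp_apply]
    rw [ht₀F]
    linear_combination (φ D * φ (Polynomial.C (b j)) + φ (Polynomial.C (c j)) * (φ N + φ N / φ D * φ D)) * (div_mul_cancel₀ (φ N) hφD).symm
  -- the two S-identities for the keys
  have hkey1S : Polynomial.C α₁ * N + Polynomial.C β₁ * D
      = Polynomial.C (α₂ * β₁ - α₁ * β₂) * Polynomial.X := by
    rw [hD_def, hN_def]; simp only [map_sub, map_mul, map_add, map_neg]; ring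
  have hkey2S : Polynomial.C α₂ * N + Polynomial.C β₂ * D
      = - Polynomial.C (α₂ * β₁ - α₁ * β₂) := by
    rw [hD_def, hN_def]; simp only [map_sub, map_mul, map_add, map_neg]; ring
  have key1 : g α₁ * φ N + g β₁ * φ D = g (α₂ * β₁ - α₁ * β₂) * φ Polynomial.X := by
    have := congrArg φ hkey1S
    simpa only [map_add, map_mul, hg, RingHom.comp_apply] using this
  have key2 : g α₂ * φ N + g β₂ * φ D = - g (α₂ * β₁ - α₁ * β₂) := by
    have := congrArg φ hkey2S
    simpa only [map_add, map_mul, map_neg, hg, RingHom.comp_apply] using this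
  -- express φ of the evaluations
  have hcomp : ∀ (q : MvPolynomial (Fin 5) k) (l : Polynomial k),
      q.IsHomogeneous 2 →
      ev (Polynomial.C.comp idk) q
        (fun j => Polynomial.C (a j) + Polynomial.C (b j) * Polynomial.X
          + Polynomial.C (c j) * Polynomial.X ^ 2) = f * l →
      φ (ev (Polynomial.C.comp idk) q zS)
        = (Polynomial.eval₂ g t₀F f * Polynomial.eval₂ g t₀F l) * ((φ D) ^ 2) ^ 2 := by
    intro q l hq hp
    have step1 : φ (ev (Polynomial.C.comp idk) q zS) = MvPolynomial.eval₂ g (φ ∘ zS) q := by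
      unfold ev
      rw [MvPolynomial.eval₂_comp_left φ]
      have hh : φ.comp (Polynomial.C.comp (RingHom.id k)) = g := by
        ext x
        simp [hg]
      rw [hh]
    have step2 : (φ ∘ zS) = fun j => wF j * (φ D) ^ 2 := funext fun j => hz j
    have step3 : MvPolynomial.eval₂ g (fun j => wF j * (φ D) ^ 2) q
        = MvPolynomial.eval₂ g wF q * ((φ D) ^ 2) ^ 2 := by
      have := ev_smul g hq wF ((φ D) ^ 2)
      simpa [ev] using this
    have step4 : MvPolynomial.eval₂ g wF q
        = Polynomial.eval₂ g t₀F (ev (Polynomial.C.comp idk) q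
          (fun j => Polynomial.C (a j) + Polynomial.C (b j) * Polynomial.X
            + Polynomial.C (c j) * Polynomial.X ^ 2)) := by
      unfold ev
      rw [show Polynomial.eval₂ g t₀F (MvPolynomial.eval₂ (Polynomial.C.comp idk)
          (fun j => Polynomial.C (a j) + Polynomial.C (b j) * Polynomial.X
            + Polynomial.C (c j) * Polynomial.X ^ 2) q)
        = (Polynomial.eval₂RingHom g t₀F) (MvPolynomial.eval₂ (Polynomial.C.comp idk)
          (fun j => Polynomial.C (a j) + Polynomial.C (b j) * Polynomial.X
            + Polynomial.C (c j) * Polynomial.X ^ 2) q) from rfl]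
      rw [MvPolynomial.eval₂_comp_left (Polynomial.eval₂RingHom g t₀F)]
      have hh1 : (Polynomial.eval₂RingHom g t₀F).comp (Polynomial.C.comp (RingHom.id k)) = g := by
        ext x
        simp only [RingHom.comp_apply, RingHom.id_apply, Polynomial.coe_eval₂RingHom,
          Polynomial.eval₂_C]
      have hh2 : (⇑(Polynomial.eval₂RingHom g t₀F) ∘ (fun j => Polynomial.C (a j)
          + Polynomial.C (b j) * Polynomial.X + Polynomial.C (c j) * Polynomial.X ^ 2)) = wF := by
        funext j
        simp only [Function.comp_apply, Polynomial.coe_eval₂RingHom, Polynomial.eval₂_add,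
          Polynomial.eval₂_mul, Polynomial.eval₂_C, Polynomial.eval₂_X_pow, Polynomial.eval₂_X,
          hwF, hg, RingHom.comp_apply]
      rw [hh1, hh2]
    rw [step1, step2, step3, step4, hp]
    rw [Polynomial.eval₂_mul]
  have hc1 := hcomp q₁ l₁ hq1 hp1
  have hc2 := hcomp q₂ l₂ hq2 hp2
  -- eval₂ of the linear parts
  have hev_l : ∀ l : Polynomial k, l.natDegree ≤ 1 →
      Polynomial.eval₂ g t₀F l = g (l.coeff 1) * t₀F + g (l.coeff 0) := by
    intro l hl
    conv_lhs => rw [Polynomial.eq_X_add_C_of_natDegree_le_one hl]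
    simp only [Polynomial.eval₂_add, Polynomial.eval₂_mul, Polynomial.eval₂_C,
      Polynomial.eval₂_X]
  -- the pencil identity over S
  have Hs : ev (Polynomial.C.comp idk) q₁ zS
      + Polynomial.X * ev (Polynomial.C.comp idk) q₂ zS = 0 := by
    apply hφ
    rw [map_add, map_mul, map_zero]
    rw [hc1, hc2, hev_l l₁ hl1, hev_l l₂ hl2]
    rw [← hα₁, ← hβ₁, ← hα₂, ← hβ₂]
    have e1' : (g α₁ * t₀F + g β₁) * φ D = g (α₂ * β₁ - α₁ * β₂) * φ Polynomial.X := by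
      rw [ht₀F, add_mul, mul_assoc, div_mul_cancel₀ _ hφD]
      exact key1
    have e2' : (g α₂ * t₀F + g β₂) * φ D = - g (α₂ * β₁ - α₁ * β₂) := by
      rw [ht₀F, add_mul, mul_assoc, div_mul_cancel₀ _ hφD]
      exact key2
    linear_combination (Polynomial.eval₂ g t₀F f * (φ D) ^ 3) * e1'
      + (φ Polynomial.X * Polynomial.eval₂ g t₀F f * (φ D) ^ 3) * e2'
  -- expand and extract coefficients
  rw [show zS = (fun j => Polynomial.C (Av j) + Polynomial.C (Bv j) * Polynomial.X
    + Polynomial.C (Cv j) * Polynomial.X ^ 2) from rfl] at Hs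
  rw [quad_expand (RingHom.id k) hq1 Av Bv Cv, quad_expand (RingHom.id k) hq2 Av Bv Cv] at Hs
  have Hs' : Polynomial.C (ev idk q₁ Av)
      + Polynomial.C (pl idk q₁ Av Bv + ev idk q₂ Av) * Polynomial.X
      + Polynomial.C (ev idk q₁ Bv + pl idk q₁ Av Cv + pl idk q₂ Av Bv) * Polynomial.X ^ 2
      + Polynomial.C (pl idk q₁ Bv Cv + ev idk q₂ Bv + pl idk q₂ Av Cv) * Polynomial.X ^ 3
      + Polynomial.C (ev idk q₁ Cv + pl idk q₂ Bv Cv) * Polynomial.X ^ 4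
      + Polynomial.C (ev idk q₂ Cv) * Polynomial.X ^ 5 = 0 := by
    simp only [map_add] at Hs ⊢
    linear_combination Hs
  have hcoe : ∀ n : ℕ, (Polynomial.C (ev idk q₁ Av)
      + Polynomial.C (pl idk q₁ Av Bv + ev idk q₂ Av) * Polynomial.X
      + Polynomial.C (ev idk q₁ Bv + pl idk q₁ Av Cv + pl idk q₂ Av Bv) * Polynomial.X ^ 2
      + Polynomial.C (pl idk q₁ Bv Cv + ev idk q₂ Bv + pl idk q₂ Av Cv) * Polynomial.X ^ 3
      + Polynomial.C (ev idk q₁ Cv + pl idk q₂ Bv Cv) * Polynomial.X ^ 4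
      + Polynomial.C (ev idk q₂ Cv) * Polynomial.X ^ 5).coeff n = 0 :=
    fun n => by rw [Hs']; simp
  have g1 : ev idk q₁ Av = 0 := by
    have h := hcoe 0
    simp only [Polynomial.coeff_add, Polynomial.coeff_C_mul, Polynomial.coeff_X_pow,
      Polynomial.coeff_C, Polynomial.coeff_X] at h
    norm_num at h
    exact h
  have g2 : pl idk q₁ Av Bv + ev idk q₂ Av = 0 := by
    have h := hcoe 1
    simp only [Polynomial.coeff_add, Polynomial.coeff_C_mul, Polynomial.coeff_X_pow,
      Polynomial.coeff_C, Polynomial.coeff_X_one] at h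
    norm_num at h
    exact h
  have g3 : ev idk q₁ Bv + pl idk q₁ Av Cv + pl idk q₂ Av Bv = 0 := by
    have h := hcoe 2
    simp only [Polynomial.coeff_add, Polynomial.coeff_C_mul, Polynomial.coeff_X_pow,
      Polynomial.coeff_C, Polynomial.coeff_X] at h
    norm_num at h
    exact h
  have g4 : pl idk q₁ Bv Cv + ev idk q₂ Bv + pl idk q₂ Av Cv = 0 := by
    have h := hcoe 3
    simp only [Polynomial.coeff_add, Polynomial.coeff_C_mul, Polynomial.coeff_X_pow,
      Polynomial.coeff_C, Polynomial.coeff_X] at h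
    norm_num at h
    exact h
  have g5 : ev idk q₁ Cv + pl idk q₂ Bv Cv = 0 := by
    have h := hcoe 4
    simp only [Polynomial.coeff_add, Polynomial.coeff_C_mul, Polynomial.coeff_X_pow,
      Polynomial.coeff_C, Polynomial.coeff_X] at h
    norm_num at h
    exact h
  have g6 : ev idk q₂ Cv = 0 := by
    have h := hcoe 5
    simp only [Polynomial.coeff_add, Polynomial.coeff_C_mul, Polynomial.coeff_X_pow,
      Polynomial.coeff_C, Polynomial.coeff_X] at h
    norm_num at h
    exact h
  exact descent2 hq1 hq2 Av Bv Cv habc' g1 g2 g3 g4 g5 g6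

end Cases

lemma ev_id_eq (q : MvPolynomial (Fin 5) k) (x : Fin 5 → k) :
    ev (RingHom.id k) q x = MvPolynomial.eval x q := by
  unfold ev
  rw [← MvPolynomial.eval_map, MvPolynomial.map_id]

end QuadAux

open QuadAux

/-- If two quadratic forms in five variables over `k` have no common nonzero `k`-zero,
then they have no common nonzero zero over any field extension of degree `3`. -/
theorem no_point_over_cubic_extension_of_quadric_intersection
    (k : Type) [Field k]
    (q₁ q₂ : MvPolynomial (Fin 5) k)
    (hdeg₁ : q₁.IsHomogeneous 2) (hdeg₂ : q₂.IsHomogeneous 2)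
    (hnopoint : ∀ v : Fin 5 → k, v ≠ 0 → ¬ (eval v q₁ = 0 ∧ eval v q₂ = 0)) :
    ∀ (K : Type) [Field K] [Algebra k K], Module.finrank k K = 3 →
      ∀ v : Fin 5 → K, v ≠ 0 →
        ¬ (eval v (MvPolynomial.map (algebraMap k K) q₁) = 0 ∧
           eval v (MvPolynomial.map (algebraMap k K) q₂) = 0) := by
  intro K _ _ hrank v hv hzero
  obtain ⟨hv1, hv2⟩ := hzero
  have hfd : FiniteDimensional k K := FiniteDimensional.of_finrank_eq_succ (n := 2) hrank
  -- find a generator θ of K over k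
  have hbot : (⊥ : Subalgebra k K) ≠ ⊤ := by
    intro h
    have h1 := Subalgebra.bot_eq_top_iff_finrank_eq_one.mp h
    rw [hrank] at h1
    omega
  obtain ⟨θ, hθ⟩ : ∃ x : K, x ∉ (⊥ : Subalgebra k K) := by
    by_contra h
    push_neg at h
    exact hbot (by rw [eq_top_iff]; intro x _; exact h x)
  have hint : IsIntegral k θ := IsIntegral.of_finite k θ
  have hndeg : (minpoly k θ).natDegree = 3 := by
    have hdvd : (minpoly k θ).natDegree ∣ 3 := by
      refine ⟨Module.finrank (IntermediateField.adjoin k {θ}) K, ?_⟩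
      rw [← IntermediateField.adjoin.finrank hint, ← hrank]
      exact (Module.finrank_mul_finrank k (IntermediateField.adjoin k {θ}) K).symm
    have h1 : (minpoly k θ).natDegree ≠ 1 := by
      intro h
      have h2 := minpoly.natDegree_eq_one_iff.mp h
      exact hθ (Algebra.mem_bot.mpr (by obtain ⟨y, hy⟩ := h2; exact ⟨y, hy⟩))
    rcases (Nat.prime_three.eq_one_or_self_of_dvd _ hdvd) with h | h
    · exact absurd h h1
    · exact h
  -- every element of K has the form a + bθ + cθ²
  have htop : Algebra.adjoin k {θ} = ⊤ := by
    apply Algebra.toSubmodule_eq_top.mp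
    apply Submodule.eq_top_of_finrank_eq
    rw [hrank]
    have hfr : Module.finrank k (Algebra.adjoin k {θ}) = 3 := by
      rw [PowerBasis.finrank (Algebra.adjoin.powerBasis hint),
        Algebra.adjoin.powerBasis_dim, hndeg]
    rw [← hfr]
    exact Subalgebra.finrank_toSubmodule (Algebra.adjoin k {θ})
  have hrepr : ∀ x : K, ∃ aa bb cc : k, x = algebraMap k K aa
      + algebraMap k K bb * θ + algebraMap k K cc * θ ^ 2 := by
    intro x
    have hx : x ∈ Algebra.adjoin k {θ} := htop ▸ Algebra.mem_top
    rw [Algebra.adjoin_singleton_eq_range_aeval] at hx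
    obtain ⟨p, hp⟩ := hx
    have hfne1 : minpoly k θ ≠ 1 := by
      intro h
      rw [h] at hndeg
      simp at hndeg
    have hmod : Polynomial.aeval θ (p %ₘ minpoly k θ) = x := by
      rw [Polynomial.modByMonic_eq_sub_mul_div _ (minpoly k θ)]
      rw [map_sub, map_mul, minpoly.aeval, zero_mul, sub_zero]
      exact hp
    have hdlt : (p %ₘ minpoly k θ).natDegree < 3 := by
      have := Polynomial.natDegree_modByMonic_lt p (minpoly.monic hint) hfne1
      rwa [hndeg] at this
    refine ⟨(p %ₘ minpoly k θ).coeff 0, (p %ₘ minpoly k θ).coeff 1,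
      (p %ₘ minpoly k θ).coeff 2, ?_⟩
    rw [← hmod, Polynomial.aeval_eq_sum_range' hdlt]
    simp [Finset.sum_range_succ, Algebra.smul_def]
  choose a b c hv_repr using fun j => hrepr (v j)
  have habc : ¬ (a = 0 ∧ b = 0 ∧ c = 0) := by
    rintro ⟨ha, hb, hc⟩
    apply hv
    funext j
    rw [hv_repr j, congrFun ha j, congrFun hb j, congrFun hc j]
    simp
  -- the polynomials p_i and their factorizations
  have haev : ∀ q : MvPolynomial (Fin 5) k,
      MvPolynomial.eval v (MvPolynomial.map (algebraMap k K) q) = 0 →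
      Polynomial.aeval θ (ev (Polynomial.C.comp (RingHom.id k)) q
        (fun j => Polynomial.C (a j) + Polynomial.C (b j) * Polynomial.X
          + Polynomial.C (c j) * Polynomial.X ^ 2)) = 0 := by
    intro q hq0
    unfold ev
    rw [show (Polynomial.aeval θ) (MvPolynomial.eval₂ (Polynomial.C.comp (RingHom.id k))
        (fun j => Polynomial.C (a j) + Polynomial.C (b j) * Polynomial.X
          + Polynomial.C (c j) * Polynomial.X ^ 2) q)
      = ((Polynomial.aeval θ : Polynomial k →ₐ[k] K) : Polynomial k →+* K)
        (MvPolynomial.eval₂ (Polynomial.C.comp (RingHom.id k))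
        (fun j => Polynomial.C (a j) + Polynomial.C (b j) * Polynomial.X
          + Polynomial.C (c j) * Polynomial.X ^ 2) q) from rfl]
    rw [MvPolynomial.eval₂_comp_left]
    have hh1 : (((Polynomial.aeval θ : Polynomial k →ₐ[k] K) : Polynomial k →+* K).comp
        (Polynomial.C.comp (RingHom.id k))) = algebraMap k K := by
      ext x
      simp
    have hh2 : (⇑((Polynomial.aeval θ : Polynomial k →ₐ[k] K) : Polynomial k →+* K) ∘
        (fun j => Polynomial.C (a j) + Polynomial.C (b j) * Polynomial.X
          + Polynomial.C (c j) * Polynomial.X ^ 2)) = v := by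
      funext j
      simp only [Function.comp_apply, map_add, map_mul, map_pow]
      rw [hv_repr j]
      simp
    rw [hh1, hh2, ← MvPolynomial.eval_map]
    exact hq0
  obtain ⟨l₁, hl₁⟩ := minpoly.dvd k θ (haev q₁ hv1)
  obtain ⟨l₂, hl₂⟩ := minpoly.dvd k θ (haev q₂ hv2)
  have hwdeg : ∀ j, (Polynomial.C (a j) + Polynomial.C (b j) * Polynomial.X
      + Polynomial.C (c j) * Polynomial.X ^ 2).natDegree ≤ 2 := by
    intro j
    refine (Polynomial.natDegree_add_le _ _).trans (max_le ?_ ?_)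
    · refine (Polynomial.natDegree_add_le _ _).trans (max_le ?_ ?_)
      · simp
      · exact (Polynomial.natDegree_C_mul_le _ _).trans (by simp)
    · exact (Polynomial.natDegree_C_mul_le _ _).trans (by simp)
  have hfne : minpoly k θ ≠ 0 := minpoly.ne_zero hint
  have hldeg : ∀ (q : MvPolynomial (Fin 5) k) (l : Polynomial k), q.IsHomogeneous 2 →
      ev (Polynomial.C.comp (RingHom.id k)) q
        (fun j => Polynomial.C (a j) + Polynomial.C (b j) * Polynomial.X
          + Polynomial.C (c j) * Polynomial.X ^ 2) = minpoly k θ * l → l.natDegree ≤ 1 := by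
    intro q l hq hl
    rcases eq_or_ne l 0 with h | h
    · simp [h]
    · have hp4 : (minpoly k θ * l).natDegree ≤ 4 := by
        rw [← hl]
        have := natDegree_ev_le (RingHom.id k) hq _ 2 hwdeg
        simpa using this
      rw [Polynomial.natDegree_mul hfne h, hndeg] at hp4
      omega
  have hld1 : l₁.natDegree ≤ 1 := hldeg q₁ l₁ hdeg₁ hl₁
  have hld2 : l₂.natDegree ≤ 1 := hldeg q₂ l₂ hdeg₂ hl₂
  -- main case split
  have hcommon : ∃ y : Fin 5 → k, y ≠ 0 ∧ ev (RingHom.id k) q₁ y = 0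
      ∧ ev (RingHom.id k) q₂ y = 0 := by
    by_cases hA : l₁.coeff 1 = 0 ∧ l₂.coeff 1 = 0
    · -- Case A : both leading coefficients vanish
      obtain ⟨hA1, hA2⟩ := hA
      have hkey : ∀ (q : MvPolynomial (Fin 5) k) (l : Polynomial k), q.IsHomogeneous 2 →
          ev (Polynomial.C.comp (RingHom.id k)) q
            (fun j => Polynomial.C (a j) + Polynomial.C (b j) * Polynomial.X
              + Polynomial.C (c j) * Polynomial.X ^ 2) = minpoly k θ * l →
          l.natDegree ≤ 1 → l.coeff 1 = 0 →
          ev (RingHom.id k) q c = 0 ∧ (c = 0 →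
            ev (RingHom.id k) q a = 0 ∧ ev (RingHom.id k) q b = 0) := by
        intro q l hq hl hld hc1
        have hlC : l = Polynomial.C (l.coeff 0) := by
          conv_lhs => rw [Polynomial.eq_X_add_C_of_natDegree_le_one hld]
          rw [hc1]
          simp
        have hFL : minpoly k θ * Polynomial.C (l.coeff 0)
            = Polynomial.C (ev (RingHom.id k) q a)
              + Polynomial.C (pl (RingHom.id k) q a b) * Polynomial.X
              + Polynomial.C (ev (RingHom.id k) q b + pl (RingHom.id k) q a c)
                * Polynomial.X ^ 2
              + Polynomial.C (pl (RingHom.id k) q b c) * Polynomial.X ^ 3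
              + Polynomial.C (ev (RingHom.id k) q c) * Polynomial.X ^ 4 := by
          rw [← hlC, ← hl]
          exact quad_expand (RingHom.id k) hq a b c
        have hcoeff4 : ev (RingHom.id k) q c = 0 := by
          have h := congrArg (fun p => Polynomial.coeff p 4) hFL
          simp only [Polynomial.coeff_mul_C, Polynomial.coeff_add, Polynomial.coeff_C_mul,
            Polynomial.coeff_X_pow, Polynomial.coeff_C, Polynomial.coeff_X] at h
          have hf4 : (minpoly k θ).coeff 4 = 0 :=
            Polynomial.coeff_eq_zero_of_natDegree_lt (by rw [hndeg]; norm_num)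
          rw [hf4] at h
          norm_num at h
          exact h.symm
        refine ⟨hcoeff4, fun hc0 => ?_⟩
        have hβ : l.coeff 0 = 0 := by
          have h := congrArg (fun p => Polynomial.coeff p 3) hFL
          simp only [Polynomial.coeff_mul_C, Polynomial.coeff_add, Polynomial.coeff_C_mul,
            Polynomial.coeff_X_pow, Polynomial.coeff_C, Polynomial.coeff_X] at h
          have hf3 : (minpoly k θ).coeff 3 = 1 := by
            have := (minpoly.monic hint).coeff_natDegree
            rwa [hndeg] at this
          rw [hf3, hc0] at h
          rw [pl_zero_right (RingHom.id k) hq b] at h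
          norm_num at h
          exact h
        have hFL0 : (0 : Polynomial k)
            = Polynomial.C (ev (RingHom.id k) q a)
              + Polynomial.C (pl (RingHom.id k) q a b) * Polynomial.X
              + Polynomial.C (ev (RingHom.id k) q b + pl (RingHom.id k) q a c)
                * Polynomial.X ^ 2
              + Polynomial.C (pl (RingHom.id k) q b c) * Polynomial.X ^ 3
              + Polynomial.C (ev (RingHom.id k) q c) * Polynomial.X ^ 4 := by
          rw [← hFL, hβ]
          simp
        constructor
        · have h := congrArg (fun p => Polynomial.coeff p 0) hFL0
          simp only [Polynomial.coeff_add, Polynomial.coeff_C_mul, Polynomial.coeff_X_pow,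
            Polynomial.coeff_C, Polynomial.coeff_X, Polynomial.coeff_zero] at h
          norm_num at h
          exact h.symm
        · have h := congrArg (fun p => Polynomial.coeff p 2) hFL0
          simp only [Polynomial.coeff_add, Polynomial.coeff_C_mul, Polynomial.coeff_X_pow,
            Polynomial.coeff_C, Polynomial.coeff_X, Polynomial.coeff_zero] at h
          norm_num at h
          rw [hc0, pl_zero_right (RingHom.id k) hq a] at h
          rw [add_zero] at h
          exact h.symm
      have hk1 := hkey q₁ l₁ hdeg₁ hl₁ hld1 hA1
      have hk2 := hkey q₂ l₂ hdeg₂ hl₂ hld2 hA2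
      by_cases hc0 : c = 0
      · obtain ⟨-, ha1, hb1⟩ := And.intro trivial (hk1.2 hc0)
        obtain ⟨ha2, hb2⟩ := hk2.2 hc0
        by_cases ha0 : a = 0
        · refine ⟨b, ?_, hb1, hb2⟩
          intro hb0
          exact habc ⟨ha0, hb0, hc0⟩
        · exact ⟨a, ha0, ha1, ha2⟩
      · exact ⟨c, hc0, hk1.1, hk2.1⟩
    · rw [not_and_or] at hA
      by_cases hRR : l₂.coeff 1 * l₁.coeff 0 - l₁.coeff 1 * l₂.coeff 0 = 0
      · rcases hA with hα | hα
        · exact caseB hdeg₁ hdeg₂ a b c (minpoly k θ) l₁ l₂ (minpoly.irreducible hint)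
            hndeg hl₁ hl₂ hld1 hld2 hα (by linear_combination -hRR)
        · obtain ⟨y, hy0, hz2, hz1⟩ := caseB (q₁ := q₂) (q₂ := q₁) hdeg₂ hdeg₁ a b c
            (minpoly k θ) l₂ l₁ (minpoly.irreducible hint) hndeg hl₂ hl₁ hld2 hld1 hα
            (by linear_combination hRR)
          exact ⟨y, hy0, hz1, hz2⟩
      · exact caseC hdeg₁ hdeg₂ a b c habc (minpoly k θ) l₁ l₂ hl₁ hl₂ hld1 hld2 hRR
  obtain ⟨y, hy0, hz1, hz2⟩ := hcommon
  rw [ev_id_eq] at hz1 hz2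
  exact hnopoint y hy0 ⟨hz1, hz2⟩
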